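/- arXiv:1902.02524 — 10 statements merged into one kernel-verified Lean document; each statement's English description precedes it below -/
import Mathlib

section
/- Let A_Δ be an n×n real matrix, C a p×n real matrix, Δ a nonzero real number, A_δΔ := Δ⁻¹ • (A_Δ − I), and N ≥ 1 a natural number. Let C_o^d be the (N·p)×n real matrix whose i-th block row (for 0 ≤ i ≤ N−1) is C * A_Δ^i, and let C_o^δ be the (N·p)×n real matrix whose i-th block row is C * A_δΔ^i. Then rank(C_o^δ) = rank(C_o^d). -/
open Finset

/-- If each block row of `Y` (namely `C * B ^ i`) lies in the row span of the block rows
of `X` (namely `C * A ^ k`, `k ≤ i`) via coefficients `c`, then `Y.rank ≤ X.rank`. -/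
private lemma rank_block_le {n p N : ℕ}
    (A B : Matrix (Fin n) (Fin n) ℝ) (C : Matrix (Fin p) (Fin n) ℝ)
    (c : ℕ → ℕ → ℝ)
    (hpow : ∀ i : ℕ, B ^ i = ∑ k ∈ Finset.range (i + 1), c i k • A ^ k)
    (X Y : Matrix (Fin N × Fin p) (Fin n) ℝ)
    (hX : ∀ (i : Fin N) (r : Fin p) (j : Fin n), X (i, r) j = (C * A ^ (i : ℕ)) r j)
    (hY : ∀ (i : Fin N) (r : Fin p) (j : Fin n), Y (i, r) j = (C * B ^ (i : ℕ)) r j) :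
    Y.rank ≤ X.rank := by
  set T : Matrix (Fin N × Fin p) (Fin N × Fin p) ℝ :=
    fun q q' => if q'.2 = q.2 ∧ (q'.1 : ℕ) ≤ (q.1 : ℕ) then c q.1 q'.1 else 0 with hT
  have hYX : Y = T * X := by
    ext ⟨i, r⟩ j
    rw [hY, hpow, Matrix.mul_sum]
    simp only [Matrix.mul_smul, Matrix.sum_apply, Matrix.smul_apply, smul_eq_mul]
    rw [Matrix.mul_apply, Fintype.sum_prod_type]
    have hstep : ∀ k : Fin N, ∑ s : Fin p, T (i, r) (k, s) * X (k, s) j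
        = (if (k : ℕ) ∈ Finset.range ((i : ℕ) + 1) then c i k * (C * A ^ (k : ℕ)) r j else 0) := by
      intro k
      rw [Finset.sum_eq_single r]
      · rw [hX, hT]
        simp only [Nat.lt_succ_iff, Finset.mem_range]
        by_cases h : (k : ℕ) ≤ (i : ℕ) <;> simp [h]
      · intro s _ hs
        simp [hT, hs]
      · simp
    rw [Finset.sum_congr rfl fun k _ => hstep k]
    rw [Fin.sum_univ_eq_sum_range
      (fun k => if k ∈ Finset.range ((i : ℕ) + 1) then c i k * (C * A ^ k) r j else 0)]
    rw [Finset.sum_ite_mem, Finset.inter_eq_right.mpr (Finset.range_subset_range.mpr i.isLt)]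
  rw [hYX]
  exact Matrix.rank_mul_le_right T X

/-- **Rank equality of observability matrices (Theorem 1).**
The delta-operator observability matrix `C_o^δ` (block rows `C * A_δΔ ^ i`) has the
same rank as the discrete-time observability matrix `C_o^d` (block rows `C * A_Δ ^ i`). -/
theorem rank_delta_observability_eq_rank_discrete_observability
    {n p : ℕ} (AΔ : Matrix (Fin n) (Fin n) ℝ) (C : Matrix (Fin p) (Fin n) ℝ)
    (Δ : ℝ) (hΔ : Δ ≠ 0)
    (AδΔ : Matrix (Fin n) (Fin n) ℝ) (hAδΔ : AδΔ = Δ⁻¹ • (AΔ - 1))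
    (N : ℕ) (hN : 1 ≤ N)
    (Cod Coδ : Matrix (Fin N × Fin p) (Fin n) ℝ)
    (hCod : ∀ (i : Fin N) (r : Fin p) (j : Fin n), Cod (i, r) j = (C * AΔ ^ (i : ℕ)) r j)
    (hCoδ : ∀ (i : Fin N) (r : Fin p) (j : Fin n), Coδ (i, r) j = (C * AδΔ ^ (i : ℕ)) r j) :
    Coδ.rank = Cod.rank := by
  have hA : AΔ = Δ • AδΔ + 1 := by
    rw [hAδΔ, smul_smul, mul_inv_cancel₀ hΔ, one_smul]
    abel
  have hc : ∀ i k : ℕ, ((i.choose k : ℕ) : Matrix (Fin n) (Fin n) ℝ)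
      = ((i.choose k : ℝ)) • (1 : Matrix (Fin n) (Fin n) ℝ) := by
    intro i k
    rw [Nat.cast_smul_eq_nsmul, nsmul_eq_mul, mul_one]
  -- AδΔ ^ i as a combination of AΔ ^ k
  have hpow1 : ∀ i : ℕ, AδΔ ^ i
      = ∑ k ∈ Finset.range (i + 1), ((Δ⁻¹) ^ i * (-1) ^ (i - k) * (i.choose k : ℝ)) • AΔ ^ k := by
    intro i
    rw [hAδΔ, smul_pow]
    have hsub : (AΔ - 1) ^ i
        = ∑ k ∈ Finset.range (i + 1), ((-1 : ℝ) ^ (i - k) * (i.choose k : ℝ)) • AΔ ^ k := by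
      rw [sub_eq_add_neg]
      rw [(Commute.one_right AΔ).neg_right.add_pow]
      refine Finset.sum_congr rfl fun k hk => ?_
      have : (-1 : Matrix (Fin n) (Fin n) ℝ) ^ (i - k) = ((-1 : ℝ) ^ (i - k)) • 1 := by
        rw [← neg_one_smul ℝ (1 : Matrix (Fin n) (Fin n) ℝ), smul_pow, one_pow]
      rw [this, hc i k]
      simp only [mul_smul_comm, smul_smul, mul_one]
      ring_nf
    rw [hsub, Finset.smul_sum]
    refine Finset.sum_congr rfl fun k hk => ?_
    rw [smul_smul, mul_assoc]
  -- AΔ ^ i as a combination of AδΔ ^ k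
  have hpow2 : ∀ i : ℕ, AΔ ^ i
      = ∑ k ∈ Finset.range (i + 1), (Δ ^ k * (i.choose k : ℝ)) • AδΔ ^ k := by
    intro i
    rw [hA, (Commute.one_right (Δ • AδΔ)).add_pow]
    refine Finset.sum_congr rfl fun k hk => ?_
    rw [one_pow, mul_one, smul_pow, hc i k]
    simp only [Matrix.smul_mul, mul_smul_comm, smul_smul, mul_one]
    rw [mul_comm]
  refine le_antisymm ?_ ?_
  · exact rank_block_le AΔ AδΔ C _ hpow1 Cod Coδ hCod hCoδ
  · exact rank_block_le AδΔ AΔ C _ hpow2 Coδ Cod hCoδ hCod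
end

section
/- Let A be an n×n real matrix and C a p×n real matrix. Then for every natural number i, the function Δ ↦ C * (Δ⁻¹ • (exp(Δ • A) − I))^i tends to C * A^i as Δ tends to 0 along nonzero reals. Consequently, the delta-operator observability matrix C_o^δ (whose i-th block row is C·A_δΔ^i with A_δΔ := Δ⁻¹ • (exp(ΔA) − I)) converges to the continuous-time observability matrix C_o (whose i-th block row is C·A^i) as the sampling period Δ tends to 0. -/
open Filter Topology

attribute [local instance] Matrix.linftyOpNormedAddCommGroup Matrix.linftyOpNormedRing
  Matrix.linftyOpNormedAlgebra

/-- Every block row `C * A_δΔ ^ i` of the delta-operator observability matrix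
(with `A_δΔ = Δ⁻¹ • (exp(ΔA) − I)`) converges to the corresponding block row
`C * A ^ i` of the continuous-time observability matrix as the sampling period `Δ`
tends to `0` along nonzero reals. -/
theorem delta_observability_tendsto_continuous_observability
    {n p : ℕ} (A : Matrix (Fin n) (Fin n) ℝ) (C : Matrix (Fin p) (Fin n) ℝ) :
    ∀ i : ℕ,
      Tendsto (fun Δ : ℝ => C * (Δ⁻¹ • (NormedSpace.exp (Δ • A) - 1)) ^ i)
        (𝓝[≠] (0 : ℝ)) (𝓝 (C * A ^ i)) := by
  intro i
  have hD : HasDerivAt (fun t : ℝ => NormedSpace.exp (t • A)) A 0 := by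
    have h0 := hasDerivAt_exp_smul_const A (0 : ℝ)
    simp at h0
    exact h0
  have h1 : Tendsto (fun Δ : ℝ => Δ⁻¹ • (NormedSpace.exp (Δ • A) - 1))
      (𝓝[≠] (0 : ℝ)) (𝓝 A) := by
    have := hD.tendsto_slope_zero
    have h0 := (hasDerivAt_iff_tendsto_slope.mp hD)
    simp [slope_fun_def, NormedSpace.exp_zero, smul_sub] at h0
    simp only [smul_sub]
    exact h0
  have hcont : Continuous (fun M : Matrix (Fin n) (Fin n) ℝ => C * M ^ i) :=
    continuous_const.matrix_mul (continuous_pow i)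
  exact (hcont.tendsto A).comp h1
end

section
/- Let A_Δ be an n×n real matrix, B_Δ an n×m real matrix, Δ a nonzero real number, A_δΔ := Δ⁻¹ • (A_Δ − I), B_δΔ := Δ⁻¹ • B_Δ, and N ≥ 1. Then (i) for every natural number k, A_δΔ^k * B_δΔ = Δ^(−(k+1)) • (∑_{j=0}^{k} (−1)^(k−j) * (k.choose j) • (A_Δ^j * B_Δ)), and (ii) the n×(N·m) controllability matrix with block columns B_Δ, A_Δ·B_Δ, …, A_Δ^{N−1}·B_Δ has the same rank as the n×(N·m) matrix with block columns B_δΔ, A_δΔ·B_δΔ, …, A_δΔ^{N−1}·B_δΔ. -/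
open Finset

private lemma sub_one_pow_mul {n m : ℕ} (A : Matrix (Fin n) (Fin n) ℝ) (B : Matrix (Fin n) (Fin m) ℝ) (k : ℕ) :
    (A - 1) ^ k * B = ∑ j ∈ range (k+1), ((-1:ℝ)^(k-j) * (k.choose j : ℝ)) • (A ^ j * B) := by
  have h : Commute A (-1) := (Commute.one_right A).neg_right
  rw [sub_eq_add_neg, h.add_pow, Matrix.sum_mul]
  refine Finset.sum_congr rfl fun j hj => ?_
  have h1 : ((-1 : Matrix (Fin n) (Fin n) ℝ)) ^ (k - j) = ((-1:ℝ)^(k-j)) • 1 := by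
    rcases Nat.even_or_odd (k - j) with he | ho
    · simp [he.neg_one_pow]
    · simp [ho.neg_one_pow]
  have h2 : ((k.choose j : ℕ) : Matrix (Fin n) (Fin n) ℝ) = ((k.choose j : ℝ)) • 1 := by
    rw [Nat.cast_smul_eq_nsmul ℝ]; simp [nsmul_eq_mul]
  rw [h1, h2]
  simp [Matrix.mul_smul, Matrix.smul_mul, smul_smul, mul_comm]

private lemma add_one_pow_mul {n m : ℕ} (A : Matrix (Fin n) (Fin n) ℝ) (B : Matrix (Fin n) (Fin m) ℝ)
    (Δ : ℝ) (j : ℕ) :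
    (Δ • A + 1) ^ j * (Δ • B) = ∑ i ∈ range (j+1), ((j.choose i : ℝ) * Δ^(i+1)) • (A ^ i * B) := by
  have h : Commute (Δ • A) (1 : Matrix (Fin n) (Fin n) ℝ) := Commute.one_right _
  rw [h.add_pow, Matrix.sum_mul]
  refine Finset.sum_congr rfl fun i hi => ?_
  have h2 : ((j.choose i : ℕ) : Matrix (Fin n) (Fin n) ℝ) = ((j.choose i : ℝ)) • 1 := by
    rw [Nat.cast_smul_eq_nsmul ℝ]; simp [nsmul_eq_mul]
  rw [h2, smul_pow]
  simp [Matrix.mul_smul, Matrix.smul_mul, smul_smul, pow_succ]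
  ring_nf

/-- **Remark 5.** (i) Block-column relation between the delta-operator and discrete-time
controllability matrices: `A_δΔ^k * B_δΔ` is `Δ^(−(k+1))` times a signed binomial
combination of the blocks `A_Δ^j * B_Δ`.  (ii) The discrete-time controllability matrix
`[B_Δ, A_Δ B_Δ, …, A_Δ^{N−1} B_Δ]` and the delta-operator controllability matrix
`[B_δΔ, A_δΔ B_δΔ, …, A_δΔ^{N−1} B_δΔ]` have the same rank. -/
theorem delta_controllability_blocks_and_rank
    {n m : ℕ} (AΔ : Matrix (Fin n) (Fin n) ℝ) (BΔ : Matrix (Fin n) (Fin m) ℝ)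
    (Δ : ℝ) (hΔ : Δ ≠ 0)
    (AδΔ : Matrix (Fin n) (Fin n) ℝ) (hAδΔ : AδΔ = Δ⁻¹ • (AΔ - 1))
    (BδΔ : Matrix (Fin n) (Fin m) ℝ) (hBδΔ : BδΔ = Δ⁻¹ • BΔ)
    (N : ℕ) (hN : 1 ≤ N)
    (Crd Crδ : Matrix (Fin n) (Fin N × Fin m) ℝ)
    (hCrd : ∀ (i : Fin n) (j : Fin N) (r : Fin m), Crd i (j, r) = (AΔ ^ (j : ℕ) * BΔ) i r)
    (hCrδ : ∀ (i : Fin n) (j : Fin N) (r : Fin m), Crδ i (j, r) = (AδΔ ^ (j : ℕ) * BδΔ) i r) :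
    (∀ k : ℕ,
        AδΔ ^ k * BδΔ =
          (Δ ^ (k + 1))⁻¹ •
            ∑ j ∈ Finset.range (k + 1),
              ((-1 : ℝ) ^ (k - j) * (k.choose j : ℝ)) • (AΔ ^ j * BΔ)) ∧
      Crd.rank = Crδ.rank := by
  have key : ∀ k : ℕ, AδΔ ^ k * BδΔ =
      (Δ ^ (k + 1))⁻¹ • ∑ j ∈ Finset.range (k + 1),
        ((-1 : ℝ) ^ (k - j) * (k.choose j : ℝ)) • (AΔ ^ j * BΔ) := by
    intro k
    rw [hAδΔ, hBδΔ, smul_pow, Matrix.smul_mul, Matrix.mul_smul, smul_smul,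
      sub_one_pow_mul, ← inv_pow, ← pow_succ]
  have hA : AΔ = Δ • AδΔ + 1 := by
    rw [hAδΔ, smul_smul, mul_inv_cancel₀ hΔ, one_smul, sub_add_cancel]
  have hB : BΔ = Δ • BδΔ := by
    rw [hBδΔ, smul_smul, mul_inv_cancel₀ hΔ, one_smul]
  have key' : ∀ j : ℕ, AΔ ^ j * BΔ =
      ∑ i ∈ range (j+1), ((j.choose i : ℝ) * Δ^(i+1)) • (AδΔ ^ i * BδΔ) := by
    intro j
    conv_lhs => rw [hA, hB]
    exact add_one_pow_mul AδΔ BδΔ Δ j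
  refine ⟨key, ?_⟩
  -- the transfer matrices
  set M : Matrix (Fin N × Fin m) (Fin N × Fin m) ℝ := fun p q =>
    if p.2 = q.2 ∧ (p.1 : ℕ) ≤ (q.1 : ℕ) then
      ((-1:ℝ)^((q.1 : ℕ) - (p.1 : ℕ)) * ((q.1 : ℕ).choose (p.1 : ℕ) : ℝ)) * (Δ ^ ((q.1:ℕ)+1))⁻¹
    else 0 with hMdef
  set M' : Matrix (Fin N × Fin m) (Fin N × Fin m) ℝ := fun p q =>
    if p.2 = q.2 ∧ (p.1 : ℕ) ≤ (q.1 : ℕ) then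
      (((q.1 : ℕ).choose (p.1 : ℕ) : ℝ) * Δ ^ ((p.1:ℕ)+1))
    else 0 with hM'def
  have hsum : ∀ (k : ℕ), k < N → ∀ f : ℕ → ℝ,
      ∑ j ∈ range N, (if j ≤ k then f j else 0) = ∑ j ∈ range (k+1), f j := by
    intro k hk f
    rw [← Finset.sum_filter]
    congr 1
    ext a
    simp only [Finset.mem_filter, Finset.mem_range, Nat.lt_succ_iff]
    omega
  have hMeq : Crδ = Crd * M := by
    ext i ⟨k, s⟩
    rw [hCrδ, key]
    rw [Matrix.mul_apply, ← Finset.univ_product_univ, Finset.sum_product]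
    have : ∀ j : Fin N, ∑ r : Fin m, Crd i (j, r) * M (j, r) (k, s) =
        (if (j:ℕ) ≤ (k:ℕ) then
          (((-1:ℝ)^((k:ℕ)-(j:ℕ)) * (((k:ℕ)).choose (j:ℕ) : ℝ)) * (Δ ^ ((k:ℕ)+1))⁻¹) *
            (AΔ ^ (j:ℕ) * BΔ) i s
        else 0) := by
      intro j
      rw [Finset.sum_eq_single s]
      · simp only [hMdef, hCrd]
        by_cases h : (j:ℕ) ≤ (k:ℕ) <;> simp [h] <;> ring
      · intro r _ hr
        simp [hMdef, hr]
      · simp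
    simp only [this]
    rw [Fin.sum_univ_eq_sum_range
      (fun jn => (if jn ≤ (k:ℕ) then
          (((-1:ℝ)^((k:ℕ)-jn) * (((k:ℕ)).choose jn : ℝ)) * (Δ ^ ((k:ℕ)+1))⁻¹) *
            (AΔ ^ jn * BΔ) i s else 0)) N,
      hsum (k:ℕ) k.isLt]
    simp only [Matrix.smul_apply, Matrix.sum_apply, smul_eq_mul, Finset.mul_sum]
    refine Finset.sum_congr rfl fun j hj => ?_
    ring
  have hM'eq : Crd = Crδ * M' := by
    ext i ⟨k, s⟩
    rw [hCrd, key']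
    rw [Matrix.mul_apply, ← Finset.univ_product_univ, Finset.sum_product]
    have : ∀ j : Fin N, ∑ r : Fin m, Crδ i (j, r) * M' (j, r) (k, s) =
        (if (j:ℕ) ≤ (k:ℕ) then
          ((((k:ℕ)).choose (j:ℕ) : ℝ) * Δ ^ ((j:ℕ)+1)) * (AδΔ ^ (j:ℕ) * BδΔ) i s
        else 0) := by
      intro j
      rw [Finset.sum_eq_single s]
      · simp only [hM'def, hCrδ]
        by_cases h : (j:ℕ) ≤ (k:ℕ) <;> simp [h] <;> ring
      · intro r _ hr
        simp [hM'def, hr]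
      · simp
    simp only [this]
    rw [Fin.sum_univ_eq_sum_range
      (fun jn => (if jn ≤ (k:ℕ) then
          ((((k:ℕ)).choose jn : ℝ) * Δ ^ (jn+1)) * (AδΔ ^ jn * BδΔ) i s else 0)) N,
      hsum (k:ℕ) k.isLt]
    simp only [Matrix.sum_apply, Matrix.smul_apply, smul_eq_mul]
  refine le_antisymm ?_ ?_
  · rw [hM'eq]; exact Matrix.rank_mul_le_left _ _
  · rw [hMeq]; exact Matrix.rank_mul_le_left _ _
end

section
/- Let R be a (not necessarily commutative) ring and M ∈ R. Then for every natural number l ≥ 1, ∑_{k=0}^{l} (−1)^(l−k) * (l.choose k) • (∑_{i=0}^{k−1} M^i) = (M − 1)^(l−1). (In particular, applied to M = A_Δ, this shows that the l-th block row of E_p Q_p D_o^d equals C·A_δΔ^{l−1}·B_δΔ, i.e., the transformed matrix D_o^δ := E_pQ_pD_o^d has the block structure [0; C·B_δΔ; …; C·A_δΔ^{N−2}·B_δΔ].) -/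
open Finset Polynomial

lemma sign_parity (S : Type*) [Monoid S] [HasDistribNeg S] {k l : ℕ} (h : k ≤ l) :
    ((-1 : S) ^ (l - k)) = (-1) ^ (k + l) := by
  have : k + l = (l - k) + 2 * k := by omega
  rw [this, pow_add, pow_mul]
  simp

lemma poly_id (l : ℕ) (hl : 1 ≤ l) :
    ∑ k ∈ Finset.range (l + 1),
        ((-1 : ℤ) ^ (l - k) * (l.choose k : ℤ)) • (∑ i ∈ Finset.range k, (X : ℤ[X]) ^ i) =
      (X - 1 : ℤ[X]) ^ (l - 1) := by
  have hX : (X - 1 : ℤ[X]) ≠ 0 := by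
    simpa using Polynomial.X_sub_C_ne_zero (1 : ℤ)
  apply mul_right_cancel₀ hX
  rw [Finset.sum_mul]
  simp_rw [smul_mul_assoc, geom_sum_mul, smul_sub]
  rw [Finset.sum_sub_distrib, ← pow_succ, Nat.sub_add_cancel hl]
  have h2 : ∑ k ∈ Finset.range (l + 1),
      ((-1 : ℤ) ^ (l - k) * (l.choose k : ℤ)) • (1 : ℤ[X]) = 0 := by
    rw [← Finset.sum_smul]
    have key : ∑ k ∈ Finset.range (l + 1), ((-1 : ℤ) ^ (l - k) * (l.choose k : ℤ)) = 0 := by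
      have h0 := Int.alternating_sum_range_choose_of_ne (n := l) (by omega)
      calc ∑ k ∈ Finset.range (l + 1), ((-1 : ℤ) ^ (l - k) * (l.choose k : ℤ))
          = ∑ k ∈ Finset.range (l + 1), (-1 : ℤ) ^ l * ((-1) ^ k * (l.choose k : ℤ)) := by
            refine Finset.sum_congr rfl fun k hk => ?_
            have hk' : k ≤ l := by simpa [Nat.lt_succ] using hk
            rw [sign_parity ℤ hk', pow_add]; ring
        _ = (-1 : ℤ) ^ l * ∑ k ∈ Finset.range (l + 1), ((-1) ^ k * (l.choose k : ℤ)) := by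
            rw [Finset.mul_sum]
        _ = 0 := by rw [h0, mul_zero]
    rw [key, zero_smul]
  rw [h2, sub_zero, sub_pow]
  refine Finset.sum_congr rfl fun k hk => ?_
  have hk' : k ≤ l := by simpa [Nat.lt_succ] using hk
  rw [zsmul_eq_mul]
  push_cast
  rw [sign_parity ℤ[X] hk']
  ring

/-- The ring identity underlying the block structure of `D_o^δ = E_p Q_p D_o^d`:
for any ring element `M` and any `l ≥ 1`, the signed binomial combination of the
geometric sums `∑_{i<k} M^i` collapses to `(M − 1)^(l−1)`. -/
theorem signed_binomial_sum_geom_eq_sub_one_pow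
    {R : Type*} [Ring R] (M : R) :
    ∀ l : ℕ, 1 ≤ l →
      ∑ k ∈ Finset.range (l + 1),
          ((-1 : ℤ) ^ (l - k) * (l.choose k : ℤ)) • (∑ i ∈ Finset.range k, M ^ i) =
        (M - 1) ^ (l - 1) := by
  intro l hl
  have h := congrArg (Polynomial.aeval M) (poly_id l hl)
  simpa [map_sum, map_zsmul, map_pow, map_sub, map_one, Polynomial.aeval_X] using h
end

section
/- Let A_τ be an n×n real matrix, B_τ an n×m real matrix, O a q×n real matrix, D a q×m real matrix, and W an invertible q×q real matrix. Define O_δ := W·O and D_δ := W·D, and suppose O_δᵀ·O_δ is invertible. Define L_y^δ := A_τ·(O_δᵀ·O_δ)⁻¹·O_δᵀ·W and L_u^δ := B_τ − A_τ·(O_δᵀ·O_δ)⁻¹·O_δᵀ·D_δ. Then for all vectors x ∈ ℝⁿ, v ∈ ℝᵐ, Y ∈ ℝ^q satisfying Y = O·x + D·v and x⁺ = A_τ·x + B_τ·v, one has x⁺ = L_y^δ·Y + L_u^δ·v. (This is the delta-operator-based multi-rate state estimation identity (14); the case W = E_pQ_p gives O_δ = C_o^δ and avoids the numerical singularity of (C_o^{dᵀ}C_o^d)⁻¹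 at fast sampling.) -/
open Matrix

/-- **Delta-operator-based multi-rate state estimation identity (14).**
With an invertible weighting `W` (the case `W = E_p Q_p` gives `O_δ = C_o^δ`),
`O_δ := W O`, `D_δ := W D`, `L_y^δ := A_τ (O_δᵀ O_δ)⁻¹ O_δᵀ W` and
`L_u^δ := B_τ − A_τ (O_δᵀ O_δ)⁻¹ O_δᵀ D_δ`, any triple satisfying `Y = O x + D v` and
`x⁺ = A_τ x + B_τ v` also satisfies `x⁺ = L_y^δ Y + L_u^δ v`. -/
theorem delta_multirate_state_estimation
    {n m q : ℕ}
    (Aτ : Matrix (Fin n) (Fin n) ℝ) (Bτ : Matrix (Fin n) (Fin m) ℝ)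
    (O : Matrix (Fin q) (Fin n) ℝ) (D : Matrix (Fin q) (Fin m) ℝ)
    (W : Matrix (Fin q) (Fin q) ℝ) (hW : IsUnit W)
    (Oδ : Matrix (Fin q) (Fin n) ℝ) (hOδ : Oδ = W * O)
    (Dδ : Matrix (Fin q) (Fin m) ℝ) (hDδ : Dδ = W * D)
    (hOδO : IsUnit (Oδᵀ * Oδ))
    (Lyδ : Matrix (Fin n) (Fin q) ℝ) (hLyδ : Lyδ = Aτ * (Oδᵀ * Oδ)⁻¹ * Oδᵀ * W)
    (Luδ : Matrix (Fin n) (Fin m) ℝ)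
    (hLuδ : Luδ = Bτ - Aτ * (Oδᵀ * Oδ)⁻¹ * Oδᵀ * Dδ)
    (x xplus : Fin n → ℝ) (v : Fin m → ℝ) (Y : Fin q → ℝ)
    (hY : Y = O *ᵥ x + D *ᵥ v)
    (hx : xplus = Aτ *ᵥ x + Bτ *ᵥ v) :
    xplus = Lyδ *ᵥ Y + Luδ *ᵥ v := by
  have hinv : (Oδᵀ * Oδ)⁻¹ * (Oδᵀ * Oδ) = 1 :=
    Matrix.nonsing_inv_mul _ ((Matrix.isUnit_iff_isUnit_det _).mp hOδO)
  have hLO : Lyδ * O = Aτ := by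
    calc Lyδ * O = Aτ * ((Oδᵀ * Oδ)⁻¹ * (Oδᵀ * (W * O))) := by
          rw [hLyδ]; rw [Matrix.mul_assoc, Matrix.mul_assoc, Matrix.mul_assoc]
      _ = Aτ * ((Oδᵀ * Oδ)⁻¹ * (Oδᵀ * Oδ)) := by rw [← hOδ]
      _ = Aτ := by rw [hinv, Matrix.mul_one]
  have hLD : Lyδ * D + Luδ = Bτ := by
    have : Lyδ * D = Aτ * (Oδᵀ * Oδ)⁻¹ * Oδᵀ * Dδ := by
      rw [hLyδ, hDδ, Matrix.mul_assoc (Aτ * (Oδᵀ * Oδ)⁻¹ * Oδᵀ) W D]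
    rw [this, hLuδ]; abel
  have : xplus = (Lyδ * O) *ᵥ x + (Lyδ * D + Luδ) *ᵥ v := by rw [hLO, hLD, hx]
  rw [this, hY, Matrix.mulVec_add, Matrix.add_mulVec, Matrix.mulVec_mulVec,
    Matrix.mulVec_mulVec]
  abel
end

section
/- Let τ > 0, l_m ≥ 0, d_m ≥ 0, f_m ≥ 0, and ε > d_m + f_m, and set a₁ := 2(ε − d_m − f_m) and b₁ := τ(ε + d_m + f_m)²/a₁. Let s, s̄, d̃, f : ℕ → ℝ be sequences satisfying, for all k: s(k+1) = s(k) + τ·(−ε·sgn(s̄(k)) + d̃(k) + f(k)), |d̃(k)| ≤ d_m, |f(k)| ≤ f_m, and |s(k) − s̄(k)| ≤ l_m. Then for every k with |s(k)| > l_m, one has s(k+1)² − s(k)² ≤ −τ·a₁·(|s(k)| − b₁). (This is the key Lyapunov decrease inequality in the proof of Theorem 2 with V(s) = s².) -/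
lemma lyap_key (τ dm fm ε a₁ b₁ x u : ℝ) (hτ : 0 < τ) (hdm : 0 ≤ dm) (hfm : 0 ≤ fm)
    (hε : dm + fm < ε) (ha₁ : a₁ = 2 * (ε - dm - fm))
    (hb : a₁ * b₁ = τ * (ε + dm + fm) ^ 2)
    (hx : 0 ≤ x) (hu1 : -ε - dm - fm ≤ u) (hu2 : u ≤ -ε + dm + fm) :
    (x + τ * u) ^ 2 - x ^ 2 ≤ -(τ * a₁ * (x - b₁)) := by
  have h1 : 0 ≤ ε + dm + fm + u := by linarith
  have h2 : 0 ≤ ε + dm + fm - u := by linarith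
  have hq : τ * τ * (u * u) ≤ τ * τ * ((ε + dm + fm) * (ε + dm + fm)) := by
    nlinarith [mul_nonneg h1 h2, mul_pos hτ hτ]
  have hlin : x * u ≤ -(ε - dm - fm) * x := by nlinarith
  have hlin2 : 2 * τ * (x * u) ≤ 2 * τ * (-(ε - dm - fm) * x) :=
    mul_le_mul_of_nonneg_left hlin (by positivity)
  have hb2 : τ * (a₁ * b₁) = τ * (τ * (ε + dm + fm) ^ 2) := by rw [hb]
  subst ha₁
  nlinarith [hq, hlin2, hb2]

/-- **Lyapunov decrease inequality in the proof of Theorem 2** (with `V(s) = s²`).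
Under the reaching law `s(k+1) = s(k) + τ(−ε sgn s̄(k) + d̃(k) + f(k))`, with bounds
`|d̃| ≤ d_m`, `|f| ≤ f_m`, `|s − s̄| ≤ l_m` and switching gain `ε > d_m + f_m`, whenever
`|s(k)| > l_m` one has `s(k+1)² − s(k)² ≤ −τ a₁ (|s(k)| − b₁)`. -/
theorem lyapunov_decrease_time_triggered
    (τ lm dm fm ε : ℝ) (hτ : 0 < τ) (hlm : 0 ≤ lm) (hdm : 0 ≤ dm) (hfm : 0 ≤ fm)
    (hε : dm + fm < ε)
    (a₁ b₁ : ℝ) (ha₁ : a₁ = 2 * (ε - dm - fm)) (hb₁ : b₁ = τ * (ε + dm + fm) ^ 2 / a₁)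
    (s sbar dtil f : ℕ → ℝ)
    (hdyn : ∀ k, s (k + 1) = s k + τ * (-ε * Real.sign (sbar k) + dtil k + f k))
    (hd : ∀ k, |dtil k| ≤ dm) (hf : ∀ k, |f k| ≤ fm)
    (hl : ∀ k, |s k - sbar k| ≤ lm) :
    ∀ k, lm < |s k| → s (k + 1) ^ 2 - s k ^ 2 ≤ -(τ * a₁ * (|s k| - b₁)) := by
  intro k hk
  have ha : 0 < a₁ := by rw [ha₁]; linarith
  have hb : a₁ * b₁ = τ * (ε + dm + fm) ^ 2 := by
    rw [hb₁]; field_simp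
  have hd' := abs_le.mp (hd k)
  have hf' := abs_le.mp (hf k)
  have hl' := abs_le.mp (hl k)
  rw [hdyn k]
  rcases lt_trichotomy (s k) 0 with h | h | h
  · have habs : |s k| = -(s k) := abs_of_neg h
    have hsb : sbar k < 0 := by
      rw [habs] at hk; linarith [hl'.2]
    rw [Real.sign_of_neg hsb, habs]
    have := lyap_key τ dm fm ε a₁ b₁ (-(s k)) (-(-ε * (-1) + dtil k + f k)) hτ hdm hfm hε ha₁ hb
      (by linarith) (by linarith) (by linarith)
    nlinarith [this]
  · rw [h] at hk; simp at hk; linarith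
  · have habs : |s k| = s k := abs_of_pos h
    have hsb : 0 < sbar k := by
      rw [habs] at hk; linarith [hl'.1]
    rw [Real.sign_of_pos hsb, habs]
    have := lyap_key τ dm fm ε a₁ b₁ (s k) (-ε * 1 + dtil k + f k) hτ hdm hfm hε ha₁ hb
      h.le (by linarith) (by linarith)
    nlinarith [this]
end

section
/- Let τ > 0, l_m ≥ 0, d_m ≥ 0, f_m ≥ 0, and ε > d_m + f_m, and set a₁ := 2(ε − d_m − f_m), b₁ := τ(ε + d_m + f_m)²/a₁, and Ω := max(l_m + τ(ε + d_m + f_m), √(b₁² + τ·a₁·b₁)). Let s, s̄, d̃, f : ℕ → ℝ be sequences satisfying, for all k: s(k+1) = s(k) + τ·(−ε·sgn(s̄(k)) + d̃(k) + f(k)), |d̃(k)| ≤ d_m, |f(k)| ≤ f_m, and |s(k) − s̄(k)| ≤ l_m. Then the band {|s| ≤ Ω} is invariant: for every k, if |s(k)| ≤ Ω then |s(k+1)| ≤ Ω. -/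
/-- **Invariance of the quasi-sliding mode band (Theorem 2).**
Under the reaching law `s(k+1) = s(k) + τ(−ε sgn s̄(k) + d̃(k) + f(k))`, with
`ε > d_m + f_m`, the band `{|s| ≤ Ω}` with
`Ω = max(l_m + τ(ε + d_m + f_m), √(b₁² + τ a₁ b₁))` is invariant. -/
theorem qsmb_invariant_time_triggered
    (τ lm dm fm ε : ℝ) (hτ : 0 < τ) (hlm : 0 ≤ lm) (hdm : 0 ≤ dm) (hfm : 0 ≤ fm)
    (hε : dm + fm < ε)
    (a₁ b₁ Ω : ℝ) (ha₁ : a₁ = 2 * (ε - dm - fm)) (hb₁ : b₁ = τ * (ε + dm + fm) ^ 2 / a₁)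
    (hΩ : Ω = max (lm + τ * (ε + dm + fm)) (Real.sqrt (b₁ ^ 2 + τ * a₁ * b₁)))
    (s sbar dtil f : ℕ → ℝ)
    (hdyn : ∀ k, s (k + 1) = s k + τ * (-ε * Real.sign (sbar k) + dtil k + f k))
    (hd : ∀ k, |dtil k| ≤ dm) (hf : ∀ k, |f k| ≤ fm)
    (hl : ∀ k, |s k - sbar k| ≤ lm) :
    ∀ k, |s k| ≤ Ω → |s (k + 1)| ≤ Ω := by
  intro k hk
  have hM : lm + τ * (ε + dm + fm) ≤ Ω := hΩ ▸ le_max_left _ _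
  have hd1 := abs_le.1 (hd k)
  have hf1 := abs_le.1 (hf k)
  have hl1 := abs_le.1 (hl k)
  have hk1 := abs_le.1 hk
  rw [hdyn k, abs_le]
  rcases lt_trichotomy (sbar k) 0 with h | h | h
  · rw [Real.sign_of_neg h]
    constructor <;> nlinarith
  · rw [h, Real.sign_zero]
    constructor <;> nlinarith
  · rw [Real.sign_of_pos h]
    constructor <;> nlinarith
end

section
/- Let τ > 0, l_m ≥ 0, d_m ≥ 0, f_m ≥ 0, and ε > d_m + f_m, and set a₁ := 2(ε − d_m − f_m), b₁ := τ(ε + d_m + f_m)²/a₁, and Ω := max(l_m + τ(ε + d_m + f_m), √(b₁² + τ·a₁·b₁)). Let s, s̄, d̃, f : ℕ → ℝ be sequences satisfying, for all k: s(k+1) = s(k) + τ·(−ε·sgn(s̄(k)) + d̃(k) + f(k)), |d̃(k)| ≤ d_m, |f(k)| ≤ f_m, and |s(k) − s̄(k)| ≤ l_m. Then the quasi-sliding mode occurs: there exists k̄ ∈ ℕ such that for all k ≥ k̄, |s(k)| ≤ Ω. (Theorem 2.) -/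
/-- **Theorem 2 (quasi-sliding mode).** Under the reaching law
`s(k+1) = s(k) + τ(−ε sgn s̄(k) + d̃(k) + f(k))`, with bounds `|d̃| ≤ d_m`, `|f| ≤ f_m`,
`|s − s̄| ≤ l_m` and switching gain `ε > d_m + f_m`, the sliding variable enters the
quasi-sliding mode band `Ω = max(l_m + τ(ε + d_m + f_m), √(b₁² + τ a₁ b₁))` in finite
time and stays there. -/
theorem quasi_sliding_mode_time_triggered
    (τ lm dm fm ε : ℝ) (hτ : 0 < τ) (hlm : 0 ≤ lm) (hdm : 0 ≤ dm) (hfm : 0 ≤ fm)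
    (hε : dm + fm < ε)
    (a₁ b₁ Ω : ℝ) (ha₁ : a₁ = 2 * (ε - dm - fm)) (hb₁ : b₁ = τ * (ε + dm + fm) ^ 2 / a₁)
    (hΩ : Ω = max (lm + τ * (ε + dm + fm)) (Real.sqrt (b₁ ^ 2 + τ * a₁ * b₁)))
    (s sbar dtil f : ℕ → ℝ)
    (hdyn : ∀ k, s (k + 1) = s k + τ * (-ε * Real.sign (sbar k) + dtil k + f k))
    (hd : ∀ k, |dtil k| ≤ dm) (hf : ∀ k, |f k| ≤ fm)
    (hl : ∀ k, |s k - sbar k| ≤ lm) :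
    ∃ kbar : ℕ, ∀ k ≥ kbar, |s k| ≤ Ω := by
  set Δ : ℝ := τ * (ε + dm + fm) with hΔ
  set δ : ℝ := τ * (ε - dm - fm) with hδ
  have hε0 : (0:ℝ) ≤ ε := by linarith
  have hδpos : 0 < δ := mul_pos hτ (by linarith)
  have hΔδ : δ ≤ Δ := by
    have : 0 ≤ τ * (2 * (dm + fm)) := mul_nonneg hτ.le (by linarith)
    rw [hΔ, hδ]; nlinarith
  have hΔpos : 0 < Δ := lt_of_lt_of_le hδpos hΔδ
  have hband : lm + Δ ≤ Ω := by rw [hΩ]; exact le_max_left _ _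
  -- step when s k > lm
  have step_pos : ∀ k, lm < s k → s (k+1) ≤ s k - δ ∧ s k - Δ ≤ s (k+1) := by
    intro k hk
    have hls := abs_le.mp (hl k)
    have hsb : 0 < sbar k := by linarith [hls.1]
    have hd' := abs_le.mp (hd k); have hf' := abs_le.mp (hf k)
    rw [hdyn k, Real.sign_of_pos hsb]
    constructor <;> [nlinarith [hd'.2, hf'.2, hτ.le]; nlinarith [hd'.1, hf'.1, hτ.le]]
  -- step when s k < -lm
  have step_neg : ∀ k, s k < -lm → s k + δ ≤ s (k+1) ∧ s (k+1) ≤ s k + Δ := by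
    intro k hk
    have hls := abs_le.mp (hl k)
    have hsb : sbar k < 0 := by linarith [hls.2]
    have hd' := abs_le.mp (hd k); have hf' := abs_le.mp (hf k)
    rw [hdyn k, Real.sign_of_neg hsb]
    constructor <;> [nlinarith [hd'.1, hf'.1, hτ.le]; nlinarith [hd'.2, hf'.2, hτ.le]]
  -- bounded step always
  have step_abs : ∀ k, |s (k+1) - s k| ≤ Δ := by
    intro k
    have hsgn : |Real.sign (sbar k)| ≤ 1 := by
      rcases Real.sign_apply_eq (sbar k) with h | h | h <;> rw [h] <;> norm_num
    have h1 : |(-ε) * Real.sign (sbar k)| ≤ ε := by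
      rw [abs_mul, abs_neg, abs_of_nonneg hε0]
      calc ε * |Real.sign (sbar k)| ≤ ε * 1 := mul_le_mul_of_nonneg_left hsgn hε0
        _ = ε := mul_one ε
    have hx : |(-ε) * Real.sign (sbar k) + dtil k + f k| ≤ ε + dm + fm := by
      calc |(-ε) * Real.sign (sbar k) + dtil k + f k|
          ≤ |(-ε) * Real.sign (sbar k) + dtil k| + |f k| := abs_add_le _ _
        _ ≤ (|(-ε) * Real.sign (sbar k)| + |dtil k|) + |f k| := by
            gcongr; exact abs_add_le _ _
        _ ≤ ε + dm + fm := by linarith [hd k, hf k]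
    have heq : s (k+1) - s k = τ * ((-ε) * Real.sign (sbar k) + dtil k + f k) := by
      rw [hdyn k]; ring
    rw [heq, abs_mul, abs_of_pos hτ, hΔ]
    exact mul_le_mul_of_nonneg_left hx hτ.le
  -- invariance of the band
  have inv : ∀ k, |s k| ≤ lm + Δ → |s (k+1)| ≤ lm + Δ := by
    intro k hk
    rw [abs_le] at hk ⊢
    by_cases h1 : lm < s k
    · obtain ⟨hu, hlo⟩ := step_pos k h1
      constructor <;> linarith
    · by_cases h2 : s k < -lm
      · obtain ⟨hlo, hu⟩ := step_neg k h2
        constructor <;> linarith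
      · push_neg at h1 h2
        have := abs_le.mp (step_abs k)
        constructor <;> linarith [this.1, this.2]
    -- reaching the band
  have reach : ∃ k, |s k| ≤ lm + Δ := by
    by_contra hcon
    push_neg at hcon
    obtain ⟨n, hn⟩ := exists_nat_gt ((|s 0| - lm - Δ) / δ)
    have hnδ : |s 0| - lm - Δ < n * δ := by
      rw [div_lt_iff₀ hδpos] at hn; linarith
    rcases lt_abs.mp (hcon 0) with h0 | h0
    · -- positive case
      have key : ∀ k : ℕ, lm + Δ < s k ∧ s k ≤ s 0 - k * δ := by
        intro k
        induction k with
        | zero => simpa using h0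
        | succ k ih =>
          obtain ⟨hk1, hk2⟩ := ih
          obtain ⟨hu, hlo⟩ := step_pos k (by linarith)
          have hpos : 0 < s (k+1) := by linarith
          have : lm + Δ < s (k+1) := by
            rcases lt_abs.mp (hcon (k+1)) with h | h
            · exact h
            · linarith
          refine ⟨this, ?_⟩
          push_cast
          linarith
      obtain ⟨h1, h2⟩ := key n
      have : |s 0| = s 0 := abs_of_pos (by linarith)
      rw [this] at hnδ
      linarith
    · -- negative case
      have key : ∀ k : ℕ, s k < -(lm + Δ) ∧ s 0 + k * δ ≤ s k := by
        intro k
        induction k with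
        | zero => exact ⟨by linarith, by simp⟩
        | succ k ih =>
          obtain ⟨hk1, hk2⟩ := ih
          obtain ⟨hlo, hu⟩ := step_neg k (by linarith)
          have hneg : s (k+1) < 0 := by linarith
          have : s (k+1) < -(lm + Δ) := by
            rcases lt_abs.mp (hcon (k+1)) with h | h
            · linarith
            · linarith
          refine ⟨this, ?_⟩
          push_cast
          linarith
      obtain ⟨h1, h2⟩ := key n
      have : |s 0| = -(s 0) := abs_of_neg (by linarith)
      rw [this] at hnδ
      linarith
  obtain ⟨k0, hk0⟩ := reach
  refine ⟨k0, fun k hk => ?_⟩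
  have : |s k| ≤ lm + Δ := by
    induction k, hk using Nat.le_induction with
    | base => exact hk0
    | succ k hk ih => exact inv k ih
  linarith
end

section
/- Let τ > 0, l_m ≥ 0, d_m ≥ 0, f_m ≥ 0, α ≥ 0, and ε > d_m + f_m + α, and set a₃ := 2(ε − α − d_m − f_m) and b₃ := τ(ε + α + d_m + f_m)²/a₃. Let s, σ, e, d̃, f : ℕ → ℝ be sequences satisfying, for all k: s(k+1) = s(k) + τ·(−e(k) − ε·σ(k) + d̃(k) + f(k)), |e(k)| ≤ α, |d̃(k)| ≤ d_m, |f(k)| ≤ f_m, and σ(k) = sgn(s(k)) whenever |s(k)| > l_m. Then for every k with |s(k)| > l_m, one has s(k+1)² − s(k)² ≤ −τ·a₃·(|s(k)| − b₃). (This is the key Lyapunov decrease inequality in the proof of Theorem 3 for the event-triggered sliding mode control.) -/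
/-- **Lyapunov decrease inequality in the proof of Theorem 3 (event-triggered SMC).**
Under `s(k+1) = s(k) + τ(−e(k) − ε σ(k) + d̃(k) + f(k))` with event error `|e| ≤ α`,
disturbance bounds `|d̃| ≤ d_m`, `|f| ≤ f_m`, sign consistency `σ(k) = sgn s(k)`
whenever `|s(k)| > l_m`, and switching gain `ε > d_m + f_m + α`, whenever `|s(k)| > l_m`
one has `s(k+1)² − s(k)² ≤ −τ a₃ (|s(k)| − b₃)`. -/
theorem lyapunov_decrease_event_triggered
    (τ lm dm fm α ε : ℝ) (hτ : 0 < τ) (hlm : 0 ≤ lm) (hdm : 0 ≤ dm) (hfm : 0 ≤ fm)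
    (hα : 0 ≤ α) (hε : dm + fm + α < ε)
    (a₃ b₃ : ℝ) (ha₃ : a₃ = 2 * (ε - α - dm - fm))
    (hb₃ : b₃ = τ * (ε + α + dm + fm) ^ 2 / a₃)
    (s σ e dtil f : ℕ → ℝ)
    (hdyn : ∀ k, s (k + 1) = s k + τ * (-e k - ε * σ k + dtil k + f k))
    (he : ∀ k, |e k| ≤ α) (hd : ∀ k, |dtil k| ≤ dm) (hf : ∀ k, |f k| ≤ fm)
    (hσ : ∀ k, lm < |s k| → σ k = Real.sign (s k)) :
    ∀ k, lm < |s k| → s (k + 1) ^ 2 - s k ^ 2 ≤ -(τ * a₃ * (|s k| - b₃)) := by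
  intro k hk
  have hs0 : s k ≠ 0 := by
    intro h; rw [h] at hk; simp at hk; linarith
  have hσk := hσ k hk
  have hsgn : σ k * s k = |s k| := by
    rw [hσk]
    rcases lt_trichotomy (s k) 0 with h | h | h
    · rw [Real.sign_of_neg h, abs_of_neg h]; ring
    · exact absurd h hs0
    · rw [Real.sign_of_pos h, abs_of_pos h]; ring
  have ha3pos : 0 < a₃ := by rw [ha₃]; linarith
  set u := -e k - ε * σ k + dtil k + f k with hu
  clear_value u
  -- bound on u * s k
  have h1 : -e k * s k ≤ α * |s k| := by
    calc -e k * s k ≤ |(-e k) * s k| := le_abs_self _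
      _ = |e k| * |s k| := by rw [abs_mul, abs_neg]
      _ ≤ α * |s k| := mul_le_mul_of_nonneg_right (he k) (abs_nonneg _)
  have h2 : dtil k * s k ≤ dm * |s k| := by
    calc dtil k * s k ≤ |dtil k * s k| := le_abs_self _
      _ = |dtil k| * |s k| := abs_mul _ _
      _ ≤ dm * |s k| := mul_le_mul_of_nonneg_right (hd k) (abs_nonneg _)
  have h3 : f k * s k ≤ fm * |s k| := by
    calc f k * s k ≤ |f k * s k| := le_abs_self _
      _ = |f k| * |s k| := abs_mul _ _
      _ ≤ fm * |s k| := mul_le_mul_of_nonneg_right (hf k) (abs_nonneg _)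
  have hus : u * s k ≤ -(a₃ / 2) * |s k| := by
    have hexp : u * s k = -e k * s k - ε * (σ k * s k) + dtil k * s k + f k * s k := by
      rw [hu]; ring
    rw [hexp, hsgn, ha₃]
    linarith
  -- bound on |u|
  have hσabs : |σ k| ≤ 1 := by
    rw [hσk]
    rcases lt_trichotomy (s k) 0 with h | h | h
    · rw [Real.sign_of_neg h]; norm_num
    · exact absurd h hs0
    · rw [Real.sign_of_pos h]; norm_num
  have hub : |u| ≤ ε + α + dm + fm := by
    have hεσ : |ε * σ k| ≤ ε := by
      rw [abs_mul, abs_of_pos (by linarith : (0:ℝ) < ε)]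
      nlinarith [abs_nonneg (σ k)]
    calc |u| ≤ |(-e k)| + |ε * σ k| + |dtil k| + |f k| := by
          rw [hu]
          calc |-e k - ε * σ k + dtil k + f k|
              ≤ |-e k - ε * σ k + dtil k| + |f k| := abs_add_le _ _
            _ ≤ (|-e k - ε * σ k| + |dtil k|) + |f k| := by
                gcongr; exact abs_add_le _ _
            _ ≤ (|(-e k)| + |ε * σ k| + |dtil k|) + |f k| := by
                gcongr; exact abs_sub _ _
      _ ≤ ε + α + dm + fm := by
          rw [abs_neg]
          have := he k; have := hd k; have := hf k; linarith
  have hu2 : u ^ 2 ≤ (ε + α + dm + fm) ^ 2 := by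
    have := sq_abs u
    nlinarith [abs_nonneg u]
  have hbb : τ * a₃ * b₃ = τ ^ 2 * (ε + α + dm + fm) ^ 2 := by
    rw [hb₃]; field_simp
  have hdyn' := hdyn k
  have hexp : s (k + 1) ^ 2 - s k ^ 2 = 2 * τ * (u * s k) + τ ^ 2 * u ^ 2 := by
    rw [hdyn', ← hu]; ring
  rw [hexp]
  have : 2 * τ * (u * s k) ≤ 2 * τ * (-(a₃ / 2) * |s k|) := by
    apply mul_le_mul_of_nonneg_left hus; linarith
  have h5 : τ ^ 2 * u ^ 2 ≤ τ ^ 2 * (ε + α + dm + fm) ^ 2 := by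
    apply mul_le_mul_of_nonneg_left hu2; positivity
  have e1 : 2 * τ * (-(a₃ / 2) * |s k|) = -(τ * a₃ * |s k|) := by ring
  have e2 : -(τ * a₃ * (|s k| - b₃)) = -(τ * a₃ * |s k|) + τ * a₃ * b₃ := by ring
  linarith [this, h5, hbb, e1, e2]
end

section
/- Let τ > 0, l_m ≥ 0, d_m ≥ 0, f_m ≥ 0, α ≥ 0, ρ ≥ 0, and ε > d_m + f_m + α. Set a₁ := 2(ε − d_m − f_m), b₁ := τ(ε + d_m + f_m)²/a₁, Ω := max(l_m + τ(ε + d_m + f_m), √(b₁² + τ·a₁·b₁)), a₃ := 2(ε − α − d_m − f_m), b₃ := τ(ε + α + d_m + f_m)²/a₃, and Ω₁ := max(l_m + τ(ε + d_m + f_m), max(√(b₃² + τ·a₃·b₃), ρ + l_m)). Then Ω₁ ≥ Ω: the practical quasi-sliding mode band of the event-triggered controller is always at least as large as the quasi-sliding mode band of the time-triggered controller. (Remark 10.) -/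
/-- **Remark 10.** The practical quasi-sliding mode band `Ω₁` of the event-triggered
controller is always at least as large as the quasi-sliding mode band `Ω` of the
time-triggered controller. -/
theorem practical_qsmb_ge_qsmb
    (τ lm dm fm α ρ ε : ℝ) (hτ : 0 < τ) (hlm : 0 ≤ lm) (hdm : 0 ≤ dm) (hfm : 0 ≤ fm)
    (hα : 0 ≤ α) (hρ : 0 ≤ ρ) (hε : dm + fm + α < ε)
    (a₁ b₁ Ω a₃ b₃ Ω₁ : ℝ)
    (ha₁ : a₁ = 2 * (ε - dm - fm)) (hb₁ : b₁ = τ * (ε + dm + fm) ^ 2 / a₁)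
    (hΩ : Ω = max (lm + τ * (ε + dm + fm)) (Real.sqrt (b₁ ^ 2 + τ * a₁ * b₁)))
    (ha₃ : a₃ = 2 * (ε - α - dm - fm)) (hb₃ : b₃ = τ * (ε + α + dm + fm) ^ 2 / a₃)
    (hΩ₁ : Ω₁ = max (lm + τ * (ε + dm + fm))
        (max (Real.sqrt (b₃ ^ 2 + τ * a₃ * b₃)) (ρ + lm))) :
    Ω ≤ Ω₁ := by
  have ha₃pos : 0 < a₃ := by rw [ha₃]; linarith
  have ha₁pos : 0 < a₁ := by rw [ha₁]; linarith
  have hc : 0 ≤ ε + dm + fm := by linarith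
  have hb₁b₃ : b₁ ≤ b₃ := by
    rw [hb₁, hb₃]
    apply div_le_div₀ (by positivity)
    · have : (ε + dm + fm) ^ 2 ≤ (ε + α + dm + fm) ^ 2 := by nlinarith
      nlinarith
    · exact ha₃pos
    · rw [ha₁, ha₃]; linarith
  have hb₁nn : 0 ≤ b₁ := by rw [hb₁]; positivity
  have h1 : τ * a₁ * b₁ = τ ^ 2 * (ε + dm + fm) ^ 2 := by
    rw [hb₁]; field_simp
  have h3 : τ * a₃ * b₃ = τ ^ 2 * (ε + α + dm + fm) ^ 2 := by
    rw [hb₃]; field_simp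
  have hτa : τ * a₁ * b₁ ≤ τ * a₃ * b₃ := by
    rw [h1, h3]; gcongr <;> nlinarith
  have hsqrt : Real.sqrt (b₁ ^ 2 + τ * a₁ * b₁) ≤ Real.sqrt (b₃ ^ 2 + τ * a₃ * b₃) := by
    apply Real.sqrt_le_sqrt
    nlinarith
  rw [hΩ, hΩ₁]
  exact max_le_max le_rfl (le_trans hsqrt (le_max_left _ _))
end
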